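/- Let α, μ > 0 and ω, ρ, τ > 0. For γ̄ > 0, let C(γ̄) = ∫₀^∞ log(1 + ω·γ/(ρ·γ + τ)) · f_{γ̄}(γ) dγ be the (natural-log) ergodic channel capacity of the impaired system under the α-μ SNR density. Then C(γ̄) tends to log(1 + ω/ρ) as γ̄ → ∞; i.e., the capacity of a hardware-impaired system has the ceiling log₂(1 + ω/ρ) bits, independent of the fading severity parameters α and μ. -/

import Mathlib

open Real MeasureTheory Filter Topology

/-- The α-μ SNR probability density function. -/
noncomputable def alphaMuDensity (α μ γbar γ : ℝ) : ℝ :=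
  if γ ≤ 0 then 0
  else (α * μ ^ μ) / (2 * Real.Gamma μ * γbar ^ (α * μ / 2)) * γ ^ (α * μ / 2 - 1) *
    Real.exp (-μ * (γ / γbar) ^ (α / 2))

open Set in
lemma aux_integrable (α μ : ℝ) (hα : 0 < α) (hμ : 0 < μ) :
    IntegrableOn (fun t : ℝ => t ^ (α * μ / 2 - 1) * Real.exp (-μ * t ^ (α / 2)))
      (Ioi (0 : ℝ)) := by
  have hp : (α / 2 : ℝ) ≠ 0 := by positivity
  have key : IntegrableOn (fun y : ℝ => Real.exp (-μ * y) * y ^ (μ - 1)) (Ioi 0) := by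
    have h1 : IntegrableOn (fun x : ℝ => x ^ (μ - 1) * Real.exp (-μ * x ^ (1:ℝ))) (Ioi 0) :=
      integrableOn_rpow_mul_exp_neg_mul_rpow (by linarith) one_pos hμ
    refine h1.congr_fun (fun y hy => ?_) measurableSet_Ioi
    simp only [Real.rpow_one]
    ring
  have := (integrableOn_Ioi_comp_rpow_iff'
      (fun y : ℝ => Real.exp (-μ * y) * y ^ (μ - 1)) hp).mpr key
  refine this.congr_fun (fun t ht => ?_) measurableSet_Ioi
  have ht0 : (0 : ℝ) < t := ht
  simp only [smul_eq_mul]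
  rw [← Real.rpow_mul ht0.le (α / 2) (μ - 1)]
  rw [show t ^ (α / 2 - 1) *
      (Real.exp (-μ * t ^ (α / 2)) * t ^ (α / 2 * (μ - 1)))
    = t ^ (α / 2 - 1) * t ^ (α / 2 * (μ - 1)) * Real.exp (-μ * t ^ (α / 2)) from by ring]
  rw [← Real.rpow_add ht0]
  congr 2
  ring

open Set in
lemma aux_value (α μ : ℝ) (hα : 0 < α) (hμ : 0 < μ) :
    ∫ t in Ioi (0 : ℝ), t ^ (α * μ / 2 - 1) * Real.exp (-μ * t ^ (α / 2))
      = μ ^ (-μ) * (2 / α) * Real.Gamma μ := by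
  have hp : (0 : ℝ) < α / 2 := by positivity
  have hq : (-1 : ℝ) < α * μ / 2 - 1 := by nlinarith
  have := integral_rpow_mul_exp_neg_mul_rpow hp hq hμ
  rw [this]
  have hα2 : (α / 2 : ℝ) ≠ 0 := by positivity
  have h1 : (-(α * μ / 2 - 1 + 1)) / (α / 2) = -μ := by
    rw [div_eq_iff hα2]; ring
  have h2 : (α * μ / 2 - 1 + 1) / (α / 2) = μ := by
    rw [div_eq_iff hα2]; ring
  rw [h1, h2, show (1:ℝ) / (α / 2) = 2 / α from one_div_div α 2]

lemma aux_d1 (α μ t : ℝ) (ht : 0 < t) :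
    alphaMuDensity α μ 1 t
      = (α * μ ^ μ) / (2 * Real.Gamma μ) * (t ^ (α * μ / 2 - 1) *
        Real.exp (-μ * t ^ (α / 2))) := by
  unfold alphaMuDensity
  rw [if_neg (not_le.mpr ht)]
  simp [Real.one_rpow]
  ring

open Set in
lemma aux_d1_integral (α μ : ℝ) (hα : 0 < α) (hμ : 0 < μ) :
    ∫ t in Ioi (0 : ℝ), alphaMuDensity α μ 1 t = 1 := by
  have hG : Real.Gamma μ ≠ 0 := Real.Gamma_ne_zero (by
    intro m; intro h; nlinarith [h, Nat.cast_nonneg (α := ℝ) m])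
  have hμμ : (0:ℝ) < μ ^ μ := Real.rpow_pos_of_pos hμ μ
  rw [setIntegral_congr_fun measurableSet_Ioi (fun t ht => aux_d1 α μ t ht)]
  rw [MeasureTheory.integral_const_mul, aux_value α μ hα hμ]
  rw [show μ ^ (-μ) = (μ ^ μ : ℝ)⁻¹ by rw [Real.rpow_neg hμ.le]]
  field_simp

lemma aux_d1_nonneg (α μ : ℝ) (hα : 0 < α) (hμ : 0 < μ) (t : ℝ) :
    0 ≤ alphaMuDensity α μ 1 t := by
  unfold alphaMuDensity
  split_ifs with h
  · exact le_rfl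
  · push_neg at h
    have hG : 0 < Real.Gamma μ := Real.Gamma_pos_of_pos hμ
    have hμμ : (0:ℝ) < μ ^ μ := Real.rpow_pos_of_pos hμ μ
    have : (0:ℝ) < (1:ℝ) ^ (α * μ / 2) := by positivity
    positivity

lemma aux_d1_meas (α μ : ℝ) : Measurable (alphaMuDensity α μ 1) := by
  unfold alphaMuDensity
  apply Measurable.ite (measurableSet_Iic) measurable_const
  fun_prop

theorem stmt_16 (α μ : ℝ) (hα : 0 < α) (hμ : 0 < μ)
    (ω ρ τ : ℝ) (hω : 0 < ω) (hρ : 0 < ρ) (hτ : 0 < τ)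
    (C : ℝ → ℝ)
    (hC : ∀ γbar : ℝ, 0 < γbar →
      C γbar = ∫ γ in Set.Ioi (0 : ℝ),
        Real.log (1 + ω * γ / (ρ * γ + τ)) * alphaMuDensity α μ γbar γ) :
    Tendsto C atTop (𝓝 (Real.log (1 + ω / ρ))) := by
  classical
  set h : ℝ → ℝ := fun x => Real.log (1 + ω * x / (ρ * x + τ)) with hh
  set F : ℝ → ℝ := fun g => ∫ t in Set.Ioi (0 : ℝ),
      h (g * t) * alphaMuDensity α μ 1 t with hF
  -- bound on |h x| for x ≥ 0
  have hL : 0 ≤ Real.log (1 + ω / ρ) := Real.log_nonneg (by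
    have : 0 ≤ ω / ρ := by positivity
    linarith)
  have hbound : ∀ x : ℝ, 0 ≤ x → |h x| ≤ Real.log (1 + ω / ρ) := by
    intro x hx
    have hden : 0 < ρ * x + τ := by positivity
    have h1 : 0 ≤ ω * x / (ρ * x + τ) := by positivity
    have h2 : ω * x / (ρ * x + τ) ≤ ω / ρ := by
      rw [div_le_div_iff₀ hden hρ]
      nlinarith
    have hpos : (0:ℝ) < 1 + ω * x / (ρ * x + τ) := by linarith
    rw [abs_of_nonneg (Real.log_nonneg (by linarith))]
    exact Real.log_le_log hpos (by linarith)
  -- C equals F on positive arguments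
  have hCF : ∀ g : ℝ, 0 < g → C g = F g := by
    intro g hg
    rw [hC g hg]
    have key := MeasureTheory.integral_comp_mul_left_Ioi
      (fun γ => h γ * alphaMuDensity α μ g γ) 0 hg
    rw [mul_zero] at key
    have : (∫ γ in Set.Ioi (0:ℝ), h γ * alphaMuDensity α μ g γ)
        = g • ∫ t in Set.Ioi (0:ℝ), h (g * t) * alphaMuDensity α μ g (g * t) := by
      rw [key, smul_smul, mul_inv_cancel₀ hg.ne', one_smul]
    rw [show (∫ γ in Set.Ioi (0:ℝ),
        Real.log (1 + ω * γ / (ρ * γ + τ)) * alphaMuDensity α μ g γ)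
      = ∫ γ in Set.Ioi (0:ℝ), h γ * alphaMuDensity α μ g γ from rfl, this, hF]
    rw [← MeasureTheory.integral_smul]
    refine setIntegral_congr_fun measurableSet_Ioi (fun t ht => ?_)
    have ht0 : (0:ℝ) < t := ht
    have hgt : (0:ℝ) < g * t := by positivity
    have e1 : alphaMuDensity α μ g (g * t)
        = g⁻¹ * alphaMuDensity α μ 1 t := by
      unfold alphaMuDensity
      rw [if_neg (not_le.mpr hgt), if_neg (not_le.mpr ht0)]
      rw [Real.mul_rpow hg.le ht0.le, Real.one_rpow,
        mul_div_cancel_left₀ _ hg.ne', div_one]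
      rw [show g ^ (α * μ / 2 - 1) = g ^ (α * μ / 2) * g⁻¹ by
        rw [show α * μ / 2 - 1 = α * μ / 2 + (-1) by ring,
          Real.rpow_add hg, Real.rpow_neg_one]]
      have hgam : (0:ℝ) < g ^ (α * μ / 2) := Real.rpow_pos_of_pos hg _
      field_simp
    rw [e1, smul_eq_mul]
    field_simp
  -- F tends to the limit
  have hFlim : Tendsto F atTop (𝓝 (Real.log (1 + ω / ρ))) := by
    have hint1 : IntegrableOn (alphaMuDensity α μ 1) (Set.Ioi (0:ℝ)) := by
      have h' : IntegrableOn (fun t : ℝ => (α * μ ^ μ) / (2 * Real.Gamma μ) *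
          (t ^ (α * μ / 2 - 1) * Real.exp (-μ * t ^ (α / 2)))) (Set.Ioi 0) :=
        (aux_integrable α μ hα hμ).const_mul _
      exact h'.congr_fun (fun t ht => (aux_d1 α μ t ht).symm) measurableSet_Ioi
    have hmeas : Measurable fun t : ℝ => alphaMuDensity α μ 1 t := aux_d1_meas α μ
    have hmain : Tendsto (fun g => ∫ t in Set.Ioi (0:ℝ),
        h (g * t) * alphaMuDensity α μ 1 t) atTop
        (𝓝 (∫ t in Set.Ioi (0:ℝ),
          Real.log (1 + ω / ρ) * alphaMuDensity α μ 1 t)) := by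
      refine MeasureTheory.tendsto_integral_filter_of_dominated_convergence
        (fun t => Real.log (1 + ω / ρ) * alphaMuDensity α μ 1 t)
        ?_ ?_ ?_ ?_
      · filter_upwards [eventually_gt_atTop (0:ℝ)] with g hg
        apply Measurable.aestronglyMeasurable
        simp only [hh]
        exact Measurable.mul (Real.measurable_log.comp (by fun_prop)) hmeas
      · filter_upwards [eventually_gt_atTop (0:ℝ)] with g hg
        refine (MeasureTheory.ae_restrict_iff' measurableSet_Ioi).mpr ?_
        filter_upwards with t ht
        have ht0 : (0:ℝ) < t := ht
        have hd0 : 0 ≤ alphaMuDensity α μ 1 t := aux_d1_nonneg α μ hα hμ t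
        rw [norm_mul, Real.norm_eq_abs, Real.norm_eq_abs, abs_of_nonneg hd0]
        exact mul_le_mul_of_nonneg_right (hbound (g * t) (by positivity)) hd0
      · exact hint1.const_mul _
      · refine (MeasureTheory.ae_restrict_iff' measurableSet_Ioi).mpr ?_
        filter_upwards with t ht
        have ht0 : (0:ℝ) < t := ht
        refine Tendsto.mul_const _ ?_
        have harg : Tendsto (fun g : ℝ => 1 + ω * (g * t) / (ρ * (g * t) + τ))
            atTop (𝓝 (1 + ω / ρ)) := by
          have hq : Tendsto (fun g : ℝ => ω * t / (ρ * t + τ / g)) atTop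
              (𝓝 (ω * t / (ρ * t + 0))) := by
            refine Tendsto.div tendsto_const_nhds
              (tendsto_const_nhds.add (tendsto_const_nhds.div_atTop tendsto_id)) ?_
            rw [add_zero]; positivity
          have heq : (fun g : ℝ => 1 + ω * (g * t) / (ρ * (g * t) + τ))
              =ᶠ[atTop] fun g => 1 + ω * t / (ρ * t + τ / g) := by
            filter_upwards [eventually_gt_atTop (0:ℝ)] with g hg
            have hden : (0:ℝ) < ρ * (g * t) + τ := by positivity
            have hden2 : (0:ℝ) < ρ * t + τ / g := by positivity
            field_simp
          have hlim : ω * t / (ρ * t + 0) = ω / ρ := by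
            rw [add_zero]
            rw [mul_div_mul_right _ _ ht0.ne']
          rw [show (1 + ω / ρ) = 1 + ω * t / (ρ * t + 0) by rw [hlim]]
          exact Tendsto.congr' heq.symm (tendsto_const_nhds.add hq)
        have hcont : ContinuousAt Real.log (1 + ω / ρ) :=
          Real.continuousAt_log (by positivity)
        exact hcont.tendsto.comp harg
    have : (∫ t in Set.Ioi (0:ℝ), Real.log (1 + ω / ρ) * alphaMuDensity α μ 1 t)
        = Real.log (1 + ω / ρ) := by
      rw [MeasureTheory.integral_const_mul, aux_d1_integral α μ hα hμ, mul_one]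
    rw [this] at hmain
    exact hmain
  refine Tendsto.congr' ?_ hFlim
  filter_upwards [eventually_gt_atTop (0:ℝ)] with g hg
  exact (hCF g hg).symm
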